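/- Let F : ℝ^m × ℝ^n → ℝ^p be a smooth map such that the partial derivative ∂F/∂y(x, y) : ℝ^n → ℝ^p has constant rank r for all (x, y). Then every point (x₀, y₀) ∈ ℝ^m × ℝ^n has an open neighbourhood W on which there exist smooth maps E₁, …, E_{n−r} : W → ℝ^n such that for every (x, y) ∈ W the vectors E₁(x, y), …, E_{n−r}(x, y) are linearly independent and span the kernel of ∂F/∂y(x, y). -/

import Mathlib

open Submodule LinearMap

/-- Auxiliary: for a linear map `A` between finite-dim real spaces, there is a projection
`P` with kernel `ker A` and a map `u` with `u ∘ A = P` and `P ∘ u = u`, `P ∘ P = P`. -/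
lemma aux_exists {E F : Type*} [NormedAddCommGroup E] [NormedSpace ℝ E] [FiniteDimensional ℝ E]
    [NormedAddCommGroup F] [NormedSpace ℝ F] [FiniteDimensional ℝ F] (A : E →L[ℝ] F) :
    ∃ (P : E →L[ℝ] E) (u : F →L[ℝ] E),
      LinearMap.ker (P : E →ₗ[ℝ] E) = LinearMap.ker (A : E →ₗ[ℝ] F) ∧ u.comp A = P ∧ P.comp u = u ∧ P.comp P = P := by
  set K : Submodule ℝ E := LinearMap.ker (A : E →ₗ[ℝ] F) with hK
  obtain ⟨C, hC⟩ := K.exists_isCompl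
  have hCK : IsCompl C K := hC.symm
  set π : E →ₗ[ℝ] C := C.linearProjOfIsCompl K hCK
  set P₀ : E →ₗ[ℝ] E := C.subtype ∘ₗ π with hP₀
  have hPC : ∀ x ∈ C, P₀ x = x := fun x hx => by
    simp [hP₀, π, Submodule.linearProjOfIsCompl_apply_left hCK ⟨x, hx⟩]
    exact congrArg Subtype.val (Submodule.linearProjOfIsCompl_apply_left hCK ⟨x, hx⟩)
  have hPK : ∀ x ∈ K, P₀ x = 0 := fun x hx => by
    simp [hP₀, π, Submodule.linearProjOfIsCompl_apply_right' hCK hx]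
    exact Submodule.linearProjOfIsCompl_apply_right' hCK hx
  have hPmem : ∀ x, P₀ x ∈ C := fun x => (π x).2
  have hkerP : LinearMap.ker P₀ = K := by
    ext x
    simp only [LinearMap.mem_ker, hP₀, LinearMap.comp_apply, Submodule.coe_subtype,
      ZeroMemClass.coe_eq_zero]
    exact Submodule.linearProjOfIsCompl_apply_eq_zero_iff hCK
  -- build u
  set A₁ : C →ₗ[ℝ] F := (A : E →ₗ[ℝ] F) ∘ₗ C.subtype with hA₁
  have hA₁inj : Function.Injective A₁ := by
    intro c₁ c₂ hcc
    have h0 : A ((c₁ : E) - (c₂ : E)) = 0 := by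
      rw [map_sub, sub_eq_zero]
      simpa [hA₁] using hcc
    have hmemK : ((c₁ : E) - (c₂ : E)) ∈ K := by rw [hK]; exact h0
    have hmemC : ((c₁ : E) - (c₂ : E)) ∈ C := sub_mem c₁.2 c₂.2
    have : ((c₁ : E) - (c₂ : E)) = 0 := Submodule.disjoint_def.1 hCK.disjoint _ hmemC hmemK
    exact Subtype.ext (sub_eq_zero.mp this)
  set e : C ≃ₗ[ℝ] LinearMap.range A₁ := LinearEquiv.ofInjective A₁ hA₁inj with he
  obtain ⟨D, hD⟩ := (LinearMap.range A₁).exists_isCompl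
  set πR : F →ₗ[ℝ] LinearMap.range A₁ := (LinearMap.range A₁).linearProjOfIsCompl D hD
  set u₀ : F →ₗ[ℝ] E := C.subtype ∘ₗ (e.symm : LinearMap.range A₁ →ₗ[ℝ] C) ∘ₗ πR with hu₀
  have humem : ∀ z, u₀ z ∈ C := fun z => (e.symm (πR z)).2
  have huA : u₀ ∘ₗ (A : E →ₗ[ℝ] F) = P₀ := by
    ext x
    have hdecomp : x - P₀ x ∈ K := by
      rw [← hkerP, LinearMap.mem_ker, map_sub, hPC _ (hPmem x), sub_self]
    have hAx : A x = A₁ ⟨P₀ x, hPmem x⟩ := by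
      have h0 : A (x - P₀ x) = 0 := by rw [hK] at hdecomp; exact hdecomp
      have h1 : A x - A (P₀ x) = 0 := by rw [← map_sub]; exact h0
      have := sub_eq_zero.mp h1
      simpa [hA₁] using this
    have hmem : A₁ ⟨P₀ x, hPmem x⟩ ∈ LinearMap.range A₁ := LinearMap.mem_range_self _ _
    have hπ : πR (A₁ ⟨P₀ x, hPmem x⟩) = ⟨A₁ ⟨P₀ x, hPmem x⟩, hmem⟩ :=
      Submodule.linearProjOfIsCompl_apply_left hD ⟨_, hmem⟩
    have hesymm : e.symm ⟨A₁ ⟨P₀ x, hPmem x⟩, hmem⟩ = ⟨P₀ x, hPmem x⟩ := by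
      rw [LinearEquiv.symm_apply_eq]
      apply Subtype.ext
      simp [he]
    have : u₀ (A x) = P₀ x := by
      rw [show (A x : F) = A₁ ⟨P₀ x, hPmem x⟩ from hAx]
      simp only [hu₀, LinearMap.comp_apply, hπ, Submodule.coe_subtype, LinearEquiv.coe_coe]
      rw [hesymm]
    simpa using this
  have hPu : P₀ ∘ₗ u₀ = u₀ := by
    ext z; exact hPC _ (humem z)
  have hPP : P₀ ∘ₗ P₀ = P₀ := by
    ext x; exact hPC _ (hPmem x)
  refine ⟨LinearMap.toContinuousLinearMap P₀, LinearMap.toContinuousLinearMap u₀, ?_, ?_, ?_, ?_⟩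
  · rw [← hkerP]; rfl
  · apply ContinuousLinearMap.coe_injective
    exact huA
  · apply ContinuousLinearMap.coe_injective
    exact hPu
  · apply ContinuousLinearMap.coe_injective
    exact hPP

/-- The rank of a continuous linear map between real normed spaces. -/
noncomputable def clmRank {E F : Type*} [NormedAddCommGroup E] [NormedSpace ℝ E]
    [NormedAddCommGroup F] [NormedSpace ℝ F] (f : E →L[ℝ] F) : ℕ :=
  Module.finrank ℝ (LinearMap.range (f : E →ₗ[ℝ] F))

set_option maxHeartbeats 2000000 in
/-- If `∂F/∂y(x,y)` has constant rank `r`, then locally around any point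
there exist `n - r` smooth vector fields that are linearly independent and span the kernel
of `∂F/∂y(x,y)` at every point. -/
theorem stmt6 {m n p : ℕ}
    (F : EuclideanSpace ℝ (Fin m) × EuclideanSpace ℝ (Fin n) → EuclideanSpace ℝ (Fin p))
    (hF : ContDiff ℝ ((⊤ : ℕ∞) : WithTop ℕ∞) F)
    (r : ℕ)
    (hranky : ∀ x y, clmRank (fderiv ℝ (fun y' => F (x, y')) y) = r)
    (x₀ : EuclideanSpace ℝ (Fin m)) (y₀ : EuclideanSpace ℝ (Fin n)) :
    ∃ W : Set (EuclideanSpace ℝ (Fin m) × EuclideanSpace ℝ (Fin n)),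
      IsOpen W ∧ (x₀, y₀) ∈ W ∧
      ∃ E : Fin (n - r) → EuclideanSpace ℝ (Fin m) × EuclideanSpace ℝ (Fin n) →
          EuclideanSpace ℝ (Fin n),
        (∀ i, ContDiffOn ℝ ((⊤ : ℕ∞) : WithTop ℕ∞) (E i) W) ∧
        ∀ q ∈ W,
          LinearIndependent ℝ (fun i : Fin (n - r) => E i q) ∧
          Submodule.span ℝ (Set.range fun i : Fin (n - r) => E i q) =
            LinearMap.ker (fderiv ℝ (fun y' => F (q.1, y')) q.2 :
              EuclideanSpace ℝ (Fin n) →ₗ[ℝ] EuclideanSpace ℝ (Fin p)) := by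
  classical
  set A : EuclideanSpace ℝ (Fin m) × EuclideanSpace ℝ (Fin n) →
      (EuclideanSpace ℝ (Fin n) →L[ℝ] EuclideanSpace ℝ (Fin p)) :=
    fun q => (fderiv ℝ F q).comp (ContinuousLinearMap.inr ℝ _ _) with hA
  have hfd : ∀ x y, fderiv ℝ (fun y' => F (x, y')) y = A (x, y) := by
    intro x y
    have h1 : HasFDerivAt F (fderiv ℝ F (x, y)) (x, y) :=
      (hF.differentiable (by simp) (x, y)).hasFDerivAt
    have h2 : HasFDerivAt (fun y' => ((x, y') :
        EuclideanSpace ℝ (Fin m) × EuclideanSpace ℝ (Fin n)))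
        (ContinuousLinearMap.inr ℝ _ _) y := HasFDerivAt.prodMk (hasFDerivAt_const x y) (hasFDerivAt_id y)
    exact (h1.comp y h2).fderiv
  have hfd' : ∀ q : EuclideanSpace ℝ (Fin m) × EuclideanSpace ℝ (Fin n),
      fderiv ℝ (fun y' => F (q.1, y')) q.2 = A q := fun q => hfd q.1 q.2
  have hAsmooth : ContDiff ℝ ((⊤ : ℕ∞) : WithTop ℕ∞) A := by
    have h1 : ContDiff ℝ ((⊤ : ℕ∞) : WithTop ℕ∞) (fderiv ℝ F) := hF.fderiv_right (by simp)
    exact (((ContinuousLinearMap.compL ℝ _ _ _).flip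
      (ContinuousLinearMap.inr ℝ _ _)).contDiff).comp h1
  have hrank : ∀ q, Module.finrank ℝ (LinearMap.range ((A q) : EuclideanSpace ℝ (Fin n) →ₗ[ℝ] EuclideanSpace ℝ (Fin p))) = r := by
    intro q
    have := hranky q.1 q.2
    rwa [hfd' q] at this
  have hker : ∀ q, Module.finrank ℝ (LinearMap.ker ((A q) : EuclideanSpace ℝ (Fin n) →ₗ[ℝ] EuclideanSpace ℝ (Fin p))) = n - r := by
    intro q
    have h := LinearMap.finrank_range_add_finrank_ker
      ((A q) : EuclideanSpace ℝ (Fin n) →ₗ[ℝ] EuclideanSpace ℝ (Fin p))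
    rw [finrank_euclideanSpace_fin] at h
    have hco : LinearMap.range ((A q) : EuclideanSpace ℝ (Fin n) →ₗ[ℝ] EuclideanSpace ℝ (Fin p))
        = LinearMap.range ((A q) : EuclideanSpace ℝ (Fin n) →ₗ[ℝ] EuclideanSpace ℝ (Fin p)) := rfl
    have hco2 : LinearMap.ker ((A q) : EuclideanSpace ℝ (Fin n) →ₗ[ℝ] EuclideanSpace ℝ (Fin p))
        = LinearMap.ker ((A q) : EuclideanSpace ℝ (Fin n) →ₗ[ℝ] EuclideanSpace ℝ (Fin p)) := rfl
    rw [hco, hco2, hrank q] at h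
    omega
  obtain ⟨P, u, hkerP, huA, hPu, hPP⟩ := aux_exists (A (x₀, y₀))
  set M : EuclideanSpace ℝ (Fin m) × EuclideanSpace ℝ (Fin n) →
      (EuclideanSpace ℝ (Fin n) →L[ℝ] EuclideanSpace ℝ (Fin n)) :=
    fun q => ContinuousLinearMap.id ℝ _ - P + u.comp (A q) with hM
  have hMsmooth : ContDiff ℝ ((⊤ : ℕ∞) : WithTop ℕ∞) M := by
    apply ContDiff.add contDiff_const
    exact ((ContinuousLinearMap.compL ℝ _ _ _ u).contDiff).comp hAsmooth
  have hM₀ : M (x₀, y₀) = 1 := by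
    show ContinuousLinearMap.id ℝ _ - P + u.comp (A (x₀, y₀)) = 1
    rw [huA]
    ext w
    simp
  set W : Set (EuclideanSpace ℝ (Fin m) × EuclideanSpace ℝ (Fin n)) :=
    {q | IsUnit (M q)} with hW
  have hWopen : IsOpen W := Units.isOpen.preimage hMsmooth.continuous
  have hq₀W : (x₀, y₀) ∈ W := by
    show IsUnit (M (x₀, y₀)); rw [hM₀]; exact isUnit_one
  set K : Submodule ℝ (EuclideanSpace ℝ (Fin n)) := LinearMap.ker ((A (x₀, y₀)) : EuclideanSpace ℝ (Fin n) →ₗ[ℝ] EuclideanSpace ℝ (Fin p)) with hKdef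
  have hKfr : Module.finrank ℝ K = n - r := hker (x₀, y₀)
  let bK : Module.Basis (Fin (n - r)) ℝ K := Module.finBasisOfFinrankEq ℝ K hKfr
  set v : Fin (n - r) → EuclideanSpace ℝ (Fin n) := fun i => (bK i : _) with hv
  refine ⟨W, hWopen, hq₀W, fun i q => Ring.inverse (M q) (v i), ?_, ?_⟩
  · intro i q hq
    have hqu : IsUnit (M q) := hq
    have h1 : ContDiffAt ℝ ((⊤ : ℕ∞) : WithTop ℕ∞) Ring.inverse (M q) := by
      have := contDiffAt_ringInverse (𝕜 := ℝ) (n := ((⊤ : ℕ∞) : WithTop ℕ∞)) hqu.unit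
      rwa [hqu.unit_spec] at this
    have h2 : ContDiffAt ℝ ((⊤ : ℕ∞) : WithTop ℕ∞) (fun q' => Ring.inverse (M q')) q :=
      h1.comp q hMsmooth.contDiffAt
    exact (((ContinuousLinearMap.apply ℝ _ (v i)).contDiff.contDiffAt).comp q h2).contDiffWithinAt
  · intro q hq
    have hqu : IsUnit (M q) := hq
    obtain ⟨Mu, hMuv⟩ := hqu
    have hinv : Ring.inverse (M q) =
        (↑Mu⁻¹ : EuclideanSpace ℝ (Fin n) →L[ℝ] EuclideanSpace ℝ (Fin n)) := by
      rw [← hMuv, Ring.inverse_unit]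
    set N : EuclideanSpace ℝ (Fin n) →L[ℝ] EuclideanSpace ℝ (Fin n) := ↑Mu⁻¹ with hN
    have hNM : ∀ w, N (M q w) = w := by
      intro w
      have h1 : (N * M q) w = w := by
        rw [hN, ← hMuv, Units.inv_mul]
        simp
      simpa [ContinuousLinearMap.mul_apply] using h1
    have hMN : ∀ w, M q (N w) = w := by
      intro w
      have h1 : (M q * N) w = w := by
        rw [hN, ← hMuv, Units.mul_inv]
        simp
      simpa [ContinuousLinearMap.mul_apply] using h1
    have hNinj : Function.Injective N := Function.LeftInverse.injective hMN
    have hE : (fun i => Ring.inverse (M q) (v i)) = fun i => N (v i) := by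
      funext i; rw [hinv]
    have hvind : LinearIndependent ℝ v :=
      (bK.linearIndependent).map' K.subtype K.ker_subtype
    constructor
    · show LinearIndependent ℝ (fun i => Ring.inverse (M q) (v i))
      rw [hE]
      exact hvind.map' (N : EuclideanSpace ℝ (Fin n) →ₗ[ℝ] EuclideanSpace ℝ (Fin n)) ((LinearMap.ker_eq_bot (f := (N : EuclideanSpace ℝ (Fin n) →ₗ[ℝ] EuclideanSpace ℝ (Fin n)))).mpr hNinj)
    · show Submodule.span ℝ (Set.range fun i => Ring.inverse (M q) (v i)) = _
      rw [hfd' q]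
      have hspanv : Submodule.span ℝ (Set.range v) = K := by
        have h : Set.range v = K.subtype '' Set.range bK := by
          rw [hv, ← Set.range_comp]; rfl
        rw [h, Submodule.span_image, bK.span_eq, Submodule.map_subtype_top]
      have hspan : Submodule.span ℝ (Set.range fun i => Ring.inverse (M q) (v i)) =
          Submodule.map (N.toLinearMap) K := by
        rw [hE, show (Set.range fun i => N (v i)) = N '' Set.range v from
          Set.range_comp _ _, ← ContinuousLinearMap.coe_coe, Submodule.span_image, hspanv]
      rw [hspan]
      have hle : LinearMap.ker ((A q) : EuclideanSpace ℝ (Fin n) →ₗ[ℝ] EuclideanSpace ℝ (Fin p)) ≤ Submodule.map (N.toLinearMap) K := by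
        intro w hw
        have hwA : A q w = 0 := LinearMap.mem_ker.mp hw
        have hMqw : M q w ∈ K := by
          rw [← hkerP, LinearMap.mem_ker]
          have h1 : M q w = w - P w := by
            rw [hM]
            simp [ContinuousLinearMap.sub_apply, ContinuousLinearMap.add_apply, hwA]
          rw [h1, map_sub]
          have h2 : P (P w) = P w := by
            have := congrArg (fun f => f w) hPP
            simpa using this
          rw [ContinuousLinearMap.coe_coe, h2, sub_self]
        exact ⟨M q w, hMqw, hNM w⟩
      have hfr : Module.finrank ℝ (LinearMap.ker ((A q) : EuclideanSpace ℝ (Fin n) →ₗ[ℝ] EuclideanSpace ℝ (Fin p))) =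
          Module.finrank ℝ (Submodule.map (N.toLinearMap) K) := by
        rw [hker q, ← hKfr]
        exact (Submodule.equivMapOfInjective N.toLinearMap hNinj K).finrank_eq
      exact (Submodule.eq_of_le_of_finrank_eq hle hfr).symm
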